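/- arXiv:1701.07630 — 11 statements merged into one kernel-verified Lean document; each statement's English description precedes it below -/
import Mathlib

section
/- Let R be a finite commutative ring and x ∈ R. If 2x is nil clean, then the degree of x in the nil clean graph G_N(R) equals |NC(R)| − 1. -/
def IsNilClean {R : Type*} [CommRing R] (r : R) : Prop :=
  ∃ n e : R, IsNilpotent n ∧ IsIdempotentElem e ∧ r = n + e

def nilCleanGraph (R : Type*) [CommRing R] : SimpleGraph R where
  Adj x y := x ≠ y ∧ IsNilClean (x + y)
  symm := by
    constructor
    rintro x y ⟨hxy, n, e, hn, he, h⟩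
    exact ⟨hxy.symm, n, e, hn, he, by rwa [add_comm]⟩
  loopless := by constructor; rintro x ⟨h, -⟩; exact h rfl

theorem stmt2 (R : Type*) [CommRing R] [Fintype R] (x : R) (h : IsNilClean (2 * x)) :
    ((nilCleanGraph R).neighborSet x).ncard = {r : R | IsNilClean r}.ncard - 1 := by
  have hset : (nilCleanGraph R).neighborSet x
      = (fun y => x + y) ⁻¹' ({r : R | IsNilClean r} \ {2 * x}) := by
    ext y
    simp only [SimpleGraph.mem_neighborSet, nilCleanGraph, Set.mem_preimage,
      Set.mem_diff, Set.mem_setOf_eq, Set.mem_singleton_iff]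
    constructor
    · rintro ⟨hxy, hnc⟩
      refine ⟨hnc, ?_⟩
      rw [two_mul]
      intro heq
      exact hxy (add_left_cancel heq).symm
    · rintro ⟨hnc, hne⟩
      refine ⟨?_, hnc⟩
      rintro rfl
      exact hne (two_mul x).symm
  rw [hset]
  have hinj : Function.Injective (fun y : R => x + y) := fun a b hab => by
    simpa using hab
  rw [Set.ncard_preimage_of_injective_subset_range hinj
    (by intro r _; exact ⟨r - x, by simp⟩)]
  exact Set.ncard_diff_singleton_of_mem (s := {r : R | IsNilClean r}) h
end

section
/- Let R be a finite commutative ring and x ∈ R. If 2x is not nil clean, then the degree of x in the nil clean graph G_N(R) equals |NC(R)|. -/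
theorem stmt3 (R : Type*) [CommRing R] [Fintype R] (x : R) (h : ¬ IsNilClean (2 * x)) :
    ((nilCleanGraph R).neighborSet x).ncard = {r : R | IsNilClean r}.ncard := by
  have himg : {r : R | IsNilClean r} = (fun y => x + y) '' ((nilCleanGraph R).neighborSet x) := by
    ext r
    constructor
    · intro hr
      refine ⟨r - x, ⟨?_, ?_⟩, by ring⟩
      · intro he
        apply h
        have h2 : 2 * x = r := by linear_combination he
        rwa [h2]
      · rwa [add_sub_cancel]
    · rintro ⟨y, ⟨-, hy⟩, rfl⟩
      exact hy
  rw [himg, Set.ncard_image_of_injective _ (add_right_injective x)]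
end

section
/- For every positive integer n and every element a of Z_n, there is a path in the nil clean graph G_N(Z_n) from a to 0; consequently G_N(Z_n) is a connected graph. -/
lemma reach_of_nilclean {R : Type*} [CommRing R] {x y : R} (h : IsNilClean (x + y)) :
    (nilCleanGraph R).Reachable x y := by
  by_cases hxy : x = y
  · exact hxy ▸ SimpleGraph.Reachable.refl x
  · exact SimpleGraph.Adj.reachable ⟨hxy, h⟩

theorem stmt4 (n : ℕ) (hn : 0 < n) :
    (∀ a : ZMod n, (nilCleanGraph (ZMod n)).Reachable a 0) ∧
      (nilCleanGraph (ZMod n)).Connected := by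
  have : NeZero n := ⟨hn.ne'⟩
  have key : ∀ k : ℕ, (nilCleanGraph (ZMod n)).Reachable ((k : ZMod n)) 0 := by
    intro k
    induction k with
    | zero => simpa using SimpleGraph.Reachable.refl (0 : ZMod n)
    | succ k ih =>
      have h1 : (nilCleanGraph (ZMod n)).Reachable ((k + 1 : ℕ) : ZMod n) (-(k : ZMod n)) := by
        apply reach_of_nilclean
        exact ⟨0, 1, IsNilpotent.zero, IsIdempotentElem.one, by push_cast; ring⟩
      have h2 : (nilCleanGraph (ZMod n)).Reachable (-(k : ZMod n)) ((k : ZMod n)) := by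
        apply reach_of_nilclean
        exact ⟨0, 0, IsNilpotent.zero, IsIdempotentElem.zero, by ring⟩
      exact (h1.trans h2).trans ih
  have hall : ∀ a : ZMod n, (nilCleanGraph (ZMod n)).Reachable a 0 := by
    intro a
    obtain ⟨k, rfl⟩ := ZMod.natCast_rightInverse.surjective a
    exact key k
  exact ⟨hall, ⟨fun a b => (hall a).trans (hall b).symm⟩⟩
end

section
/- If R is a finite commutative ring that is not a field, then the girth of the nil clean graph G_N(R) is 3, i.e., G_N(R) contains a 3-cycle. -/
lemma girth_eq_three_of_triangle {V : Type*} {G : SimpleGraph V} {a b c : V}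
    (hab : G.Adj a b) (hbc : G.Adj b c) (hca : G.Adj c a) : G.girth = 3 := by
  have hABne : a ≠ b := hab.ne
  have hBCne : b ≠ c := hbc.ne
  have hCAne : c ≠ a := hca.ne
  have hBA : ¬ b = a := fun h => hABne h.symm
  have hCB : ¬ c = b := fun h => hBCne h.symm
  have hAC : ¬ a = c := fun h => hCAne h.symm
  let w : G.Walk a a := .cons hab (.cons hbc (.cons hca .nil))
  have hpath : (SimpleGraph.Walk.cons hbc (.cons hca .nil) : G.Walk b a).IsPath := by
    simp [SimpleGraph.Walk.isPath_def, hBCne, hCAne, hBA, hCB, hAC, hABne]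
  have hcyc : w.IsCycle := by
    rw [SimpleGraph.Walk.cons_isCycle_iff]
    refine ⟨hpath, fun hmem => ?_⟩
    simp only [SimpleGraph.Walk.edges_cons, SimpleGraph.Walk.edges_nil, List.mem_cons,
      List.not_mem_nil, or_false, Sym2.eq, Sym2.rel_iff', Prod.mk.injEq,
      Prod.swap_prod_mk] at hmem
    simp only [hABne, hBA, hBCne, hCB, hCAne, hAC, false_and, and_false, or_self,
      or_false, false_or] at hmem
    try exact hmem
    try tauto
  have hnotac : ¬ G.IsAcyclic := fun hG => hG w hcyc
  have h1 : G.egirth ≤ (w.length : ℕ∞) :=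
    iInf_le_of_le a (iInf_le_of_le w (iInf_le _ hcyc))
  have hlen : w.length = 3 := rfl
  have h2 : G.girth ≤ 3 := by
    have := ENat.toNat_le_toNat h1 (by simp [hlen])
    simpa [SimpleGraph.girth, hlen] using this
  have h3 : 3 ≤ G.girth := SimpleGraph.three_le_girth hnotac
  omega

lemma exists_idem_pow {R : Type*} [CommRing R] [Fintype R] (a : R) :
    ∃ k : ℕ, 1 ≤ k ∧ IsIdempotentElem (a ^ k) := by
  obtain ⟨i, j, hne, hij⟩ := Finite.exists_ne_map_eq_of_infinite (fun n : ℕ => a ^ n)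
  wlog hlt : i < j generalizing i j
  · exact this j i hne.symm hij.symm (by omega)
  set r := j - i with hr
  have hr1 : 1 ≤ r := by omega
  have hbase : a ^ i = a ^ (i + r) := by
    rw [hr]; rw [show i + (j - i) = j by omega]; exact hij
  have hstep : ∀ t : ℕ, a ^ i = a ^ (i + t * r) := by
    intro t
    induction t with
    | zero => simp
    | succ t ih =>
      have : a ^ (i + (t + 1) * r) = a ^ (i + r) * a ^ (t * r) := by
        rw [← pow_add]; ring_nf
      rw [this, ← hbase, ← pow_add, ← ih]
  set k := (i + 1) * r with hkdef
  have hk' : i + 1 ≤ k := by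
    calc i + 1 = (i + 1) * 1 := by ring
      _ ≤ (i + 1) * r := Nat.mul_le_mul_left _ hr1
  refine ⟨k, by omega, ?_⟩
  have hk : i ≤ k := by omega
  have hik : a ^ i = a ^ (i + k) := hstep (i + 1)
  unfold IsIdempotentElem
  calc a ^ k * a ^ k = a ^ (i + k) * a ^ (k - i) := by
        rw [← pow_add, ← pow_add]; congr 1; omega
    _ = a ^ i * a ^ (k - i) := by rw [← hik]
    _ = a ^ k := by rw [← pow_add]; congr 1; omega

theorem stmt6 (R : Type*) [CommRing R] [Fintype R] [Nontrivial R] (h : ¬ IsField R) :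
    (nilCleanGraph R).girth = 3 := by
  by_cases hnil : ∃ n : R, n ≠ 0 ∧ IsNilpotent n
  · obtain ⟨n, hn0, hn⟩ := hnil
    have hn1 : n ≠ 1 := by
      rintro rfl
      obtain ⟨m, hm⟩ := hn
      rw [one_pow] at hm
      exact one_ne_zero hm
    -- triangle 0, 1, n
    refine girth_eq_three_of_triangle (a := (0 : R)) (b := 1) (c := n) ?_ ?_ ?_
    · exact ⟨zero_ne_one, 0, 1, IsNilpotent.zero, by simp [IsIdempotentElem], by simp⟩
    · exact ⟨Ne.symm hn1, n, 1, hn, by simp [IsIdempotentElem], by ring⟩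
    · exact ⟨hn0, n, 0, hn, by simp [IsIdempotentElem], by simp⟩
  · push_neg at hnil
    -- R is reduced; get a nonzero nonunit
    obtain ⟨a, ha0, ha⟩ : ∃ a : R, a ≠ 0 ∧ ∀ b, a * b ≠ 1 := by
      by_contra hc
      push_neg at hc
      exact h ⟨exists_pair_ne R, mul_comm, fun {x} hx => hc x hx⟩
    obtain ⟨k, hk1, hke⟩ := exists_idem_pow a
    set e := a ^ k with he
    have he0 : e ≠ 0 := by
      intro h0
      exact hnil a ha0 ⟨k, h0⟩
    have he1 : e ≠ 1 := by
      intro h1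
      refine ha (a ^ (k - 1)) ?_
      rw [← pow_succ', show k - 1 + 1 = k by omega, ← he, h1]
    have hf : IsIdempotentElem (1 - e) := hke.one_sub
    have hef : e ≠ 1 - e := by
      intro heq
      have h2e : e + e = 1 := by linear_combination heq
      have h3 := congrArg (e * ·) h2e
      simp only [mul_add, mul_one] at h3
      rw [hke] at h3
      exact he1 (by linear_combination h2e - h3)
    -- triangle 0, e, 1-e
    refine girth_eq_three_of_triangle (a := (0 : R)) (b := e) (c := 1 - e) ?_ ?_ ?_
    · exact ⟨Ne.symm he0, 0, e, IsNilpotent.zero, hke, by simp⟩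
    · exact ⟨hef, 0, 1, IsNilpotent.zero, by simp [IsIdempotentElem], by ring⟩
    · refine ⟨?_, 0, 1 - e, IsNilpotent.zero, hf, by ring⟩
      intro h0
      exact he1 (by linear_combination -h0)
end

section
/- For a prime p, the nil clean graph of the field Z_p is the path 0 — 1 — (p−1) — 2 — (p−2) — 3 — ⋯ visiting every element exactly once; in particular, for p odd G_N(Z_p) is a tree (has no cycles). -/
open SimpleGraph Walk

def pf (p : ℕ) (i : ℕ) : ZMod p :=
  if Even i then -((i / 2 : ℕ) : ZMod p) else ((i / 2 : ℕ) : ZMod p) + 1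

def pg (p : ℕ) [NeZero p] (x : ZMod p) : ℕ :=
  if x = 0 then 0 else if 2 * x.val ≤ p then 2 * x.val - 1 else 2 * (p - x.val)

lemma pf_even (p k : ℕ) : pf p (2 * k) = -((k : ℕ) : ZMod p) := by
  simp [pf, Nat.mul_div_cancel_left k (by norm_num : 0 < 2)]

lemma pf_odd (p k : ℕ) : pf p (2 * k + 1) = ((k : ℕ) : ZMod p) + 1 := by
  have : ¬ Even (2 * k + 1) := by simp [Nat.even_add_one, parity_simps]
  simp [pf, this, Nat.mul_add_div (by norm_num : 0 < 2)]

lemma natCast_zmod_eq_iff {p a b : ℕ} [Fact p.Prime] (ha : a < p) (hb : b < p)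
    (h : (a : ZMod p) = (b : ZMod p)) : a = b :=
  ((ZMod.natCast_eq_natCast_iff a b p).mp h).eq_of_lt_of_lt ha hb

lemma natCast_zmod_zero_iff {p a : ℕ} (h : (a : ZMod p) = 0) : p ∣ a :=
  (ZMod.natCast_eq_zero_iff a p).mp h

lemma pg_pf (p : ℕ) [Fact p.Prime] {i : ℕ} (hi : i < p) : pg p (pf p i) = i := by
  have hp2 : 2 ≤ p := (Fact.out : p.Prime).two_le
  rcases Nat.even_or_odd i with ⟨k, hk⟩ | ⟨k, hk⟩
  · subst hk
    rw [show k + k = 2 * k by ring] at *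
    rw [pf_even]
    rcases Nat.eq_zero_or_pos k with rfl | hk0
    · simp [pg]
    · have hkp : k < p := by omega
      have hne : ((k : ℕ) : ZMod p) ≠ 0 := by
        intro h0
        have := natCast_zmod_zero_iff h0
        exact absurd (Nat.le_of_dvd hk0 this) (by omega)
      have hval : ((k : ℕ) : ZMod p).val = k := by
        rw [ZMod.val_natCast, Nat.mod_eq_of_lt hkp]
      have hvneg : (-((k : ℕ) : ZMod p)).val = p - k := by
        rw [ZMod.neg_val, if_neg hne, hval]
      rw [pg, if_neg (by simpa [neg_eq_zero] using hne), hvneg, if_neg (by omega)]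
      omega
  · subst hk
    rw [pf_odd]
    have hkp : k + 1 < p := by omega
    have hcast : ((k : ℕ) : ZMod p) + 1 = (((k + 1 : ℕ)) : ZMod p) := by push_cast; ring
    have hne : (((k + 1 : ℕ)) : ZMod p) ≠ 0 := by
      intro h0
      have := natCast_zmod_zero_iff h0
      exact absurd (Nat.le_of_dvd (by omega) this) (by omega)
    have hval : (((k + 1 : ℕ)) : ZMod p).val = k + 1 := by
      rw [ZMod.val_natCast, Nat.mod_eq_of_lt hkp]
    rw [pg, hcast, if_neg hne, hval, if_pos (by omega)]
    omega

lemma pf_inj (p : ℕ) [Fact p.Prime] {i j : ℕ} (hi : i < p) (hj : j < p)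
    (h : pf p i = pf p j) : i = j := by
  have := congrArg (pg p) h
  rwa [pg_pf p hi, pg_pf p hj] at this

lemma pf_surj (p : ℕ) [Fact p.Prime] (z : ZMod p) : ∃ i, i < p ∧ pf p i = z := by
  classical
  have hcard : ((Finset.range p).image (pf p)).card = p := by
    rw [Finset.card_image_of_injOn (fun a ha b hb hab =>
      pf_inj p (Finset.mem_range.mp ha) (Finset.mem_range.mp hb) hab), Finset.card_range]
  have huniv : (Finset.range p).image (pf p) = Finset.univ := by
    apply Finset.eq_univ_of_card
    rw [hcard, ZMod.card]
  have : z ∈ (Finset.range p).image (pf p) := by rw [huniv]; exact Finset.mem_univ z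
  obtain ⟨i, hi, hfi⟩ := Finset.mem_image.mp this
  exact ⟨i, Finset.mem_range.mp hi, hfi⟩

lemma adj_iff (p : ℕ) [Fact p.Prime] (x y : ZMod p) :
    (nilCleanGraph (ZMod p)).Adj x y ↔ x ≠ y ∧ (x + y = 0 ∨ x + y = 1) := by
  constructor
  · rintro ⟨hne, n, e, hn, he, h⟩
    refine ⟨hne, ?_⟩
    rw [hn.eq_zero, zero_add] at h
    rcases IsIdempotentElem.iff_eq_zero_or_one.mp he with rfl | rfl
    · exact Or.inl h
    · exact Or.inr h
  · rintro ⟨hne, h | h⟩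
    · exact ⟨hne, 0, 0, IsNilpotent.zero, IsIdempotentElem.zero, by rw [h]; ring⟩
    · exact ⟨hne, 0, 1, IsNilpotent.zero, IsIdempotentElem.one, by rw [h]; ring⟩

-- mixed parity helper: i = 2a even, j = 2b+1 odd
lemma adj_mixed (p : ℕ) [Fact p.Prime] {a b : ℕ} (ha : 2 * a < p) (hb : 2 * b + 1 < p)
    (hsum : pf p (2 * a) + pf p (2 * b + 1) = 0 ∨ pf p (2 * a) + pf p (2 * b + 1) = 1) :
    2 * a + 1 = 2 * b + 1 ∨ 2 * b + 1 + 1 = 2 * a := by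
  rw [pf_even, pf_odd] at hsum
  rcases hsum with h | h
  · right
    have : ((b + 1 : ℕ) : ZMod p) = ((a : ℕ) : ZMod p) := by
      push_cast
      linear_combination h
    have := natCast_zmod_eq_iff (by omega) (by omega) this
    omega
  · left
    have : ((b : ℕ) : ZMod p) = ((a : ℕ) : ZMod p) := by
      linear_combination h
    have := natCast_zmod_eq_iff (by omega) (by omega) this
    omega

lemma adj_indices (p : ℕ) [Fact p.Prime] {i j : ℕ} (hi : i < p) (hj : j < p)
    (hadj : (nilCleanGraph (ZMod p)).Adj (pf p i) (pf p j)) : i + 1 = j ∨ j + 1 = i := by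
  have hp2 : 2 ≤ p := (Fact.out : p.Prime).two_le
  obtain ⟨hne, hsum⟩ := (adj_iff p _ _).mp hadj
  rcases Nat.even_or_odd i with ⟨a, hia⟩ | ⟨a, hia⟩ <;>
    rcases Nat.even_or_odd j with ⟨b, hjb⟩ | ⟨b, hjb⟩
  · -- even, even
    exfalso
    subst hia hjb
    rw [show a + a = 2 * a by ring, show b + b = 2 * b by ring] at *
    rw [pf_even, pf_even] at hsum hne
    rcases hsum with h | h
    · have h0 : (((a + b : ℕ)) : ZMod p) = 0 := by push_cast; linear_combination -h
      have := natCast_zmod_zero_iff h0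
      have hab : a + b = 0 := by
        rcases Nat.eq_zero_or_pos (a + b) with h' | h'
        · exact h'
        · exact absurd (Nat.le_of_dvd h' this) (by omega)
      have : a = b := by omega
      exact hne (by rw [this])
    · have h0 : (((a + b + 1 : ℕ)) : ZMod p) = 0 := by push_cast; linear_combination -h
      have hdvd := natCast_zmod_zero_iff h0
      have heq : a + b + 1 = p := by
        have := Nat.le_of_dvd (by omega) hdvd
        have hle : a + b + 1 ≤ p := by omega
        omega
      have : a = b := by omega
      exact hne (by rw [this])
  · -- even, odd
    subst hia hjb
    rw [show a + a = 2 * a by ring] at hsum hne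
    rcases adj_mixed p (by omega) (by omega) hsum with h | h
    · left; omega
    · right; omega
  · -- odd, even
    subst hia hjb
    rw [show b + b = 2 * b by ring] at hsum hne
    have hsum' : pf p (2 * b) + pf p (2 * a + 1) = 0 ∨ pf p (2 * b) + pf p (2 * a + 1) = 1 := by
      rw [add_comm]; exact hsum
    rcases adj_mixed p (by omega) (by omega) hsum' with h | h
    · right; omega
    · left; omega
  · -- odd, odd
    exfalso
    subst hia hjb
    rw [pf_odd, pf_odd] at hsum hne
    rcases hsum with h | h
    · have h0 : (((a + b + 2 : ℕ)) : ZMod p) = 0 := by push_cast; linear_combination h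
      have hdvd := natCast_zmod_zero_iff h0
      have heq : a + b + 2 = p := by
        have := Nat.le_of_dvd (by omega) hdvd
        have hle : a + b + 2 ≤ p := by omega
        omega
      have : a = b := by omega
      exact hne (by rw [this])
    · have h0 : (((a + b + 1 : ℕ)) : ZMod p) = 0 := by push_cast; linear_combination h
      have hdvd := natCast_zmod_zero_iff h0
      have := Nat.le_of_dvd (by omega) hdvd
      omega

lemma acyclic_of_label {V : Type*} (G : SimpleGraph V) (g : V → ℕ)
    (ginj : Function.Injective g)
    (hadj : ∀ x y, G.Adj x y → g x + 1 = g y ∨ g y + 1 = g x) : G.IsAcyclic := by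
  intro v c hc
  classical
  obtain ⟨u, hu, hmax⟩ : ∃ u ∈ c.support, ∀ z ∈ c.support, g z ≤ g u := by
    obtain ⟨u, hu⟩ : ∃ u, u ∈ c.support.argmax g := by
      cases h : c.support.argmax g with
      | none => exact absurd (List.argmax_eq_none.mp h) (support_ne_nil c)
      | some m => exact ⟨m, by simp [Option.mem_def, h]⟩
    exact ⟨u, List.argmax_mem hu, fun z hz => List.le_of_mem_argmax hz hu⟩
  have hc' := hc.rotate hu
  set c' := c.rotate u hu with hc'def
  have hmem : ∀ z, z ∈ c'.support → z ∈ c.support := by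
    intro z hz
    rw [support_eq_cons c'] at hz
    rcases List.mem_cons.mp hz with rfl | hz
    · exact hu
    · have := (support_rotate c u hu).mem_iff.mp hz
      rw [support_eq_cons c]
      exact List.mem_cons_of_mem _ this
  -- decompose c'
  cases hcc : c' with
  | nil => exact hc'.not_nil (hcc ▸ Walk.Nil.nil)
  | @cons _ x _ h q =>
    obtain ⟨y, q', h', heq⟩ := Walk.exists_cons_eq_concat h q
    have hx : g x + 1 = g u := by
      rcases hadj u x h with h1 | h1
      · have : g x ≤ g u := hmax x (hmem x (by rw [hcc]; simp))
        omega
      · exact h1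
    have hy : g y + 1 = g u := by
      have hymem : y ∈ c'.support := by
        rw [hcc, heq, support_concat]
        exact by simp [List.concat_eq_append, end_mem_support q']
      rcases hadj y u h' with h1 | h1
      · exact h1
      · have : g y ≤ g u := hmax y (hmem y hymem)
        omega
    have hxy : x = y := ginj (by omega)
    have hedges : s(u, x) :: q.edges = q'.edges ++ [s(y, u)] := by
      have := congrArg Walk.edges heq
      rw [edges_cons, edges_concat] at this
      simpa [List.concat_eq_append] using this
    have hnodup : (s(u, x) :: q.edges).Nodup := by
      have := hc'.edges_nodup
      rwa [hcc, edges_cons] at this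
    have hq'ne : q'.edges ≠ [] := by
      intro hnil
      have hlen := hc'.three_le_length
      rw [hcc, heq] at hlen
      have h1 : (q'.concat h').length = q'.length + 1 := Walk.length_concat _ _
      have h2 : q'.length = q'.edges.length := (Walk.length_edges q').symm
      rw [hnil, List.length_nil] at h2
      omega
    have : s(y, u) ∈ q.edges := by
      have htail := congrArg List.tail hedges
      simp only [List.tail_cons] at htail
      rw [htail, List.tail_append_of_ne_nil hq'ne]
      exact List.mem_append_right _ (List.mem_singleton_self _)
    rw [← hxy, Sym2.eq_swap] at this
    exact (List.nodup_cons.mp hnodup).1 this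

lemma pf_adj_succ (p : ℕ) [Fact p.Prime] {i : ℕ} (h : i + 1 < p) :
    (nilCleanGraph (ZMod p)).Adj (pf p i) (pf p (i + 1)) := by
  rw [adj_iff]
  refine ⟨fun he => by have := pf_inj p (by omega) h he; omega, ?_⟩
  rcases Nat.even_or_odd i with ⟨k, hk⟩ | ⟨k, hk⟩
  · subst hk
    rw [show k + k = 2 * k by ring, show 2 * k + 1 = 2 * k + 1 by rfl]
    right
    rw [pf_even, pf_odd]; ring
  · subst hk
    left
    rw [show 2 * k + 1 + 1 = 2 * (k + 1) by ring, pf_odd, pf_even]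
    push_cast; ring

def pw (p : ℕ) [Fact p.Prime] :
    (m : ℕ) → m < p → (nilCleanGraph (ZMod p)).Walk (pf p m) (pf p 0)
  | 0, _ => Walk.nil
  | m + 1, h => Walk.cons (pf_adj_succ p h).symm (pw p m (by omega))

lemma pw_support (p : ℕ) [Fact p.Prime] :
    ∀ (m : ℕ) (h : m < p), (pw p m h).support = (List.range (m + 1)).reverse.map (pf p)
  | 0, h => by simp [pw, List.range_succ]
  | m + 1, h => by
    rw [pw, Walk.support_cons, pw_support p m (by omega), List.range_succ (n := m + 1)]
    simp

theorem stmt9 (p : ℕ) [Fact p.Prime] :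
    (∃ (u v : ZMod p) (w : (nilCleanGraph (ZMod p)).Walk u v),
      w.IsPath ∧ ∀ z : ZMod p, z ∈ w.support) ∧
    (Odd p → (nilCleanGraph (ZMod p)).IsAcyclic) := by
  have hp2 : 2 ≤ p := (Fact.out : p.Prime).two_le
  constructor
  · refine ⟨pf p (p - 1), pf p 0, pw p (p - 1) (by omega), ?_, ?_⟩
    · rw [Walk.isPath_def, pw_support]
      refine List.Nodup.map_on ?_ (List.nodup_reverse.mpr List.nodup_range)
      intro x hx y hy hxy
      simp only [List.mem_reverse, List.mem_range] at hx hy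
      exact pf_inj p (by omega) (by omega) hxy
    · intro z
      obtain ⟨i, hi, rfl⟩ := pf_surj p z
      rw [pw_support]
      simp only [List.mem_map, List.mem_reverse, List.mem_range]
      exact ⟨i, by omega, rfl⟩
  · intro _
    refine acyclic_of_label _ (pg p) ?_ ?_
    · intro x y hxy
      obtain ⟨i, hi, rfl⟩ := pf_surj p x
      obtain ⟨j, hj, rfl⟩ := pf_surj p y
      rw [pg_pf p hi, pg_pf p hj] at hxy
      rw [hxy]
    · intro x y hadj
      obtain ⟨i, hi, rfl⟩ := pf_surj p x
      obtain ⟨j, hj, rfl⟩ := pf_surj p y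
      rw [pg_pf p hi, pg_pf p hj]
      exact adj_indices p hi hj hadj
end

section
/- Let R be a finite commutative weak nil clean ring whose only idempotents are 0 and 1. Then {1, 2} is a dominating set for the nil clean graph G_N(R): every element of R either lies in {1, 2} or is adjacent to 1 or to 2. -/
theorem stmt12 (R : Type*) [CommRing R] [Fintype R]
    (hwnc : ∀ r : R, ∃ n e : R, IsNilpotent n ∧ IsIdempotentElem e ∧
      (r = n + e ∨ r = n - e))
    (hid : ∀ e : R, IsIdempotentElem e → e = 0 ∨ e = 1) :
    ∀ a : R, a = 1 ∨ a = 2 ∨ (nilCleanGraph R).Adj a 1 ∨ (nilCleanGraph R).Adj a 2 := by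
  intro a
  by_cases h1 : a = 1
  · exact Or.inl h1
  by_cases h2 : a = 2
  · exact Or.inr (Or.inl h2)
  obtain ⟨n, e, hn, he, hcase⟩ := hwnc (a + 1)
  rcases hcase with h | h
  · exact Or.inr (Or.inr (Or.inl ⟨h1, n, e, hn, he, h⟩))
  · rcases hid e he with rfl | rfl
    · exact Or.inr (Or.inr (Or.inl ⟨h1, n, 0, hn, IsIdempotentElem.zero,
        by linear_combination h⟩))
    · exact Or.inr (Or.inr (Or.inr ⟨h2, n, 0, hn, IsIdempotentElem.zero,
        by linear_combination h⟩))
end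

section
/- Let R = A × B where A is a finite commutative nil clean ring and B is a finite commutative weak nil clean ring with no nontrivial idempotents. Then {(1,1), (2,2)} is a dominating set for the nil clean graph G_N(A × B). -/
lemma prod_nilclean {A B : Type*} [CommRing A] [CommRing B] {a : A} {b : B}
    (ha : IsNilClean a) (hb : IsNilClean b) : IsNilClean ((a, b) : A × B) := by
  obtain ⟨n1, e1, hn1, he1, h1⟩ := ha
  obtain ⟨n2, e2, hn2, he2, h2⟩ := hb
  refine ⟨(n1, n2), (e1, e2), ?_, ?_, ?_⟩
  · obtain ⟨k, hk⟩ := hn1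
    obtain ⟨l, hl⟩ := hn2
    exact ⟨k + l, by
      ext
      · simp [Prod.pow_fst, pow_add, hk]
      · simp [Prod.pow_snd, pow_add, hl]⟩
  · unfold IsIdempotentElem at *
    ext <;> simp [he1, he2]
  · ext <;> simp [h1, h2]

lemma nilclean_of_nilpotent {B : Type*} [CommRing B] {n : B} (h : IsNilpotent n) :
    IsNilClean n :=
  ⟨n, 0, h, by simp [IsIdempotentElem], by simp⟩

lemma B_key {B : Type*} [CommRing B]
    (hB : ∀ b : B, ∃ n e : B, IsNilpotent n ∧ IsIdempotentElem e ∧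
      (b = n + e ∨ b = n - e))
    (hidB : ∀ e : B, IsIdempotentElem e → e = 0 ∨ e = 1) (b : B) :
    IsNilClean (b + 1) ∨ IsNilClean (b + 2) := by
  -- first: 2 or 3 is nilpotent
  have h23 : IsNilpotent (2 : B) ∨ IsNilpotent (3 : B) := by
    obtain ⟨n, e, hn, he, h⟩ := hB (3 : B)
    rcases hidB e he with rfl | rfl
    · right
      have h3 : (3 : B) = n := by rcases h with h | h <;> linear_combination h
      exact h3 ▸ hn
    · left
      rcases h with h | h
      · have : (2 : B) = n := by linear_combination h
        exact this ▸ hn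
      · have h4 : IsNilpotent ((2 : B) ^ 2) := by
          have : (2 : B) ^ 2 = n := by linear_combination h
          exact this ▸ hn
        exact (IsNilpotent.pow_iff_pos (by norm_num)).mp h4
  obtain ⟨n, e, hn, he, h⟩ := hB b
  rcases hidB e he with rfl | rfl
  · left
    have hb : b = n := by rcases h with h | h <;> simpa using h
    exact ⟨n, 1, hn, by simp [IsIdempotentElem], by rw [hb]⟩
  · rcases h with h | h
    · rcases h23 with h2 | h3
      · left
        refine nilclean_of_nilpotent ?_
        have : b + 1 = n + 2 := by rw [h]; ring
        rw [this]
        exact Commute.isNilpotent_add (Commute.all _ _) hn h2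
      · right
        refine nilclean_of_nilpotent ?_
        have : b + 2 = n + 3 := by rw [h]; ring
        rw [this]
        exact Commute.isNilpotent_add (Commute.all _ _) hn h3
    · left
      refine nilclean_of_nilpotent ?_
      have : b + 1 = n := by rw [h]; ring
      rw [this]; exact hn

theorem stmt13 (A B : Type*) [CommRing A] [Fintype A] [CommRing B] [Fintype B]
    (hA : ∀ a : A, IsNilClean a)
    (hB : ∀ b : B, ∃ n e : B, IsNilpotent n ∧ IsIdempotentElem e ∧
      (b = n + e ∨ b = n - e))
    (hidB : ∀ e : B, IsIdempotentElem e → e = 0 ∨ e = 1) :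
    ∀ x : A × B, x = (1, 1) ∨ x = (2, 2) ∨
      (nilCleanGraph (A × B)).Adj x (1, 1) ∨ (nilCleanGraph (A × B)).Adj x (2, 2) := by
  intro x
  by_cases h1 : x = (1, 1)
  · exact Or.inl h1
  by_cases h2 : x = (2, 2)
  · exact Or.inr (Or.inl h2)
  obtain ⟨a, b⟩ := x
  rcases B_key hB hidB b with hb | hb
  · refine Or.inr (Or.inr (Or.inl ⟨h1, ?_⟩))
    have : ((a, b) : A × B) + (1, 1) = (a + 1, b + 1) := rfl
    rw [this]
    exact prod_nilclean (hA (a + 1)) hb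
  · refine Or.inr (Or.inr (Or.inr ⟨h2, ?_⟩))
    have : ((a, b) : A × B) + (2, 2) = (a + 2, b + 2) := rfl
    rw [this]
    exact prod_nilclean (hA (a + 2)) hb
end

section
/- Let R be a finite commutative weak nil clean ring. Then {1, 2} is a dominating set for the nil clean graph G_N(R). -/
theorem stmt14 (R : Type*) [CommRing R] [Fintype R]
    (hwnc : ∀ r : R, ∃ n e : R, IsNilpotent n ∧ IsIdempotentElem e ∧
      (r = n + e ∨ r = n - e)) :
    ∀ a : R, a = 1 ∨ a = 2 ∨ (nilCleanGraph R).Adj a 1 ∨ (nilCleanGraph R).Adj a 2 := by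
  intro a
  obtain ⟨n, e, hn, he, h | h⟩ := hwnc (a + 1)
  · by_cases ha : a = 1
    · exact Or.inl ha
    · exact Or.inr (Or.inr (Or.inl ⟨ha, n, e, hn, he, h⟩))
  · by_cases ha : a = 2
    · exact Or.inr (Or.inl ha)
    · refine Or.inr (Or.inr (Or.inr ⟨ha, n, 1 - e, hn, ?_, ?_⟩))
      · have he' : e * e = e := he
        show (1 - e) * (1 - e) = 1 - e
        linear_combination he' 
      · have : a + 2 = n + (1 - e) := by linear_combination h
        exact this
end

section
/- A finite commutative ring R is nil clean if and only if the diameter of its nil clean graph G_N(R) equals 1. -/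
theorem stmt17 (R : Type*) [CommRing R] [Fintype R] [Nontrivial R] :
    (∀ r : R, IsNilClean r) ↔ (nilCleanGraph R).diam = 1 := by
  rw [SimpleGraph.diam_eq_one]
  constructor
  · intro h
    ext x y
    simp only [nilCleanGraph, SimpleGraph.top_adj]
    exact ⟨fun ⟨h1, _⟩ => h1, fun hxy => ⟨hxy, h _⟩⟩
  · intro h r
    by_cases hr : r = 0
    · exact ⟨0, 0, IsNilpotent.zero, IsIdempotentElem.zero, by simp [hr]⟩
    · have : (nilCleanGraph R).Adj 0 r := by
        rw [h]; exact fun h0 => hr h0.symm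
      simpa using this.2
end

section
/- Let R be a finite commutative ring that is weak nil clean but not nil clean, and whose only idempotents are 0 and 1. Then the diameter of the nil clean graph G_N(R) equals 2. -/
lemma isNilClean_of_nilpotent {R : Type*} [CommRing R] {r : R} (h : IsNilpotent r) :
    IsNilClean r :=
  ⟨r, 0, h, by simp [IsIdempotentElem], by simp⟩

lemma isNilClean_of_nilpotent_sub_one {R : Type*} [CommRing R] {r : R}
    (h : IsNilpotent (r - 1)) : IsNilClean r :=
  ⟨r - 1, 1, h, by simp [IsIdempotentElem], by ring⟩

lemma isNilClean_iff {R : Type*} [CommRing R]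
    (hid : ∀ e : R, IsIdempotentElem e → e = 0 ∨ e = 1) (r : R) :
    IsNilClean r ↔ IsNilpotent r ∨ IsNilpotent (r - 1) := by
  constructor
  · rintro ⟨n, e, hn, he, rfl⟩
    rcases hid e he with rfl | rfl
    · left; simpa using hn
    · right; simpa using hn
  · rintro (h | h)
    · exact isNilClean_of_nilpotent h
    · exact isNilClean_of_nilpotent_sub_one h

theorem stmt18 (R : Type*) [CommRing R] [Fintype R]
    (hwnc : ∀ r : R, ∃ n e : R, IsNilpotent n ∧ IsIdempotentElem e ∧
      (r = n + e ∨ r = n - e))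
    (hnc : ¬ ∀ r : R, IsNilClean r)
    (hid : ∀ e : R, IsIdempotentElem e → e = 0 ∨ e = 1) :
    (nilCleanGraph R).diam = 2 := by
  -- trichotomy
  have tri : ∀ r : R, IsNilpotent r ∨ IsNilpotent (r - 1) ∨ IsNilpotent (r + 1) := by
    intro r
    obtain ⟨n, e, hn, he, h | h⟩ := hwnc r
    · rcases hid e he with rfl | rfl
      · left; simpa using h ▸ (by simpa using hn : IsNilpotent (n + 0))
      · right; left; subst h; simpa using hn
    · rcases hid e he with rfl | rfl
      · left; subst h; simpa using hn
      · right; right; subst h; simpa using hn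
  push_neg at hnc
  obtain ⟨r, hr⟩ := hnc
  have hr0 : r ≠ 0 := by
    rintro rfl; exact hr (isNilClean_of_nilpotent ⟨1, by simp⟩)
  have hnadj : ¬ (nilCleanGraph R).Adj 0 r := by
    rintro ⟨-, h⟩
    rw [zero_add] at h
    exact hr h
  -- every pair has edist ≤ 2
  have hle : (nilCleanGraph R).ediam ≤ 2 := by
    rw [SimpleGraph.ediam_le_iff]
    intro u v
    rcases eq_or_ne u v with rfl | huv
    · simp [SimpleGraph.edist_self]
    have adj_case : ∀ {a b : R}, (nilCleanGraph R).Adj a b → (nilCleanGraph R).edist a b ≤ 2 := by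
      intro a b h
      rw [SimpleGraph.edist_eq_one_iff_adj.mpr h]
      exact one_le_two
    have two_walk : ∀ {a b z : R}, (nilCleanGraph R).Adj a z → (nilCleanGraph R).Adj z b →
        (nilCleanGraph R).edist a b ≤ 2 := by
      intro a b z h1 h2
      have := SimpleGraph.edist_le (SimpleGraph.Walk.cons h1 (SimpleGraph.Walk.cons h2 SimpleGraph.Walk.nil))
      simpa using this
    rcases tri (v - u) with hd | hd | hd
    · -- v - u nilpotent or ...
      rcases eq_or_ne (-u) u with h2u | h2u
      · -- 2u = 0, so u + v = v - u nilpotent, adjacent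
        have : u + v = v - u := by
          have : (2 : R) * u = 0 := by linear_combination -h2u
          linear_combination this
        exact adj_case ⟨huv, isNilClean_of_nilpotent (this ▸ hd)⟩
      rcases eq_or_ne (-u) v with hv | hv
      · exact adj_case ⟨huv, isNilClean_of_nilpotent (by rw [← hv]; simpa using (⟨1, by simp⟩ : IsNilpotent (0:R)))⟩
      · refine two_walk (z := -u) ⟨h2u.symm, isNilClean_of_nilpotent (by simpa using (⟨1, by simp⟩ : IsNilpotent (0:R)))⟩
          ⟨hv, isNilClean_of_nilpotent (by rwa [show -u + v = v - u by ring])⟩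
    · rcases eq_or_ne (-u) u with h2u | h2u
      · have : u + v - 1 = v - u - 1 := by
          have : (2 : R) * u = 0 := by linear_combination -h2u
          linear_combination this
        exact adj_case ⟨huv, isNilClean_of_nilpotent_sub_one (this ▸ hd)⟩
      rcases eq_or_ne (-u) v with hv | hv
      · exact adj_case ⟨huv, isNilClean_of_nilpotent (by rw [← hv]; simpa using (⟨1, by simp⟩ : IsNilpotent (0:R)))⟩
      · refine two_walk (z := -u) ⟨h2u.symm, isNilClean_of_nilpotent (by simpa using (⟨1, by simp⟩ : IsNilpotent (0:R)))⟩
          ⟨hv, isNilClean_of_nilpotent_sub_one (by rwa [show -u + v - 1 = v - u - 1 by ring])⟩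
    · -- v - u + 1 nilpotent, use z = 1 - u
      rcases eq_or_ne (1 - u) u with h2u | h2u
      · have : u + v = v - u + 1 := by linear_combination -h2u
        exact adj_case ⟨huv, isNilClean_of_nilpotent (this ▸ hd)⟩
      rcases eq_or_ne (1 - u) v with hv | hv
      · exact adj_case ⟨huv, isNilClean_of_nilpotent_sub_one (by rw [← hv]; simpa using (⟨1, by simp⟩ : IsNilpotent (0:R)))⟩
      · refine two_walk (z := 1 - u)
          ⟨h2u.symm, isNilClean_of_nilpotent_sub_one (by simpa using (⟨1, by simp⟩ : IsNilpotent (0:R)))⟩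
          ⟨hv, isNilClean_of_nilpotent (by rwa [show 1 - u + v = v - u + 1 by ring])⟩
  have hge : 2 ≤ (nilCleanGraph R).ediam := by
    have h0 : (nilCleanGraph R).edist 0 r ≠ 0 := by
      intro h
      exact hr0 ((SimpleGraph.edist_eq_zero_iff.mp h).symm)
    have h1 : (nilCleanGraph R).edist 0 r ≠ 1 := by
      intro h
      exact hnadj (SimpleGraph.edist_eq_one_iff_adj.mp h)
    have : 1 < (nilCleanGraph R).edist 0 r :=
      lt_of_le_of_ne (ENat.one_le_iff_ne_zero.mpr h0) (Ne.symm h1)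
    calc (2 : ℕ∞) ≤ (nilCleanGraph R).edist 0 r := by
          rw [show (2:ℕ∞) = 1 + 1 by rfl]
          exact (ENat.add_one_le_iff (by simp)).mpr this
      _ ≤ _ := SimpleGraph.edist_le_ediam
  have hed : (nilCleanGraph R).ediam = 2 := le_antisymm hle hge
  rw [SimpleGraph.diam, hed]
  rfl
end

section
/- For a prime p, the diameter of the nil clean graph G_N(Z_p) equals p − 1. -/
namespace Stmt19Aux

variable (p : ℕ) [hp : Fact p.Prime]

lemma adj_iff (x y : ZMod p) :
    (nilCleanGraph (ZMod p)).Adj x y ↔ x ≠ y ∧ (x + y = 0 ∨ x + y = 1) := by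
  constructor
  · rintro ⟨hne, n, e, hn, he, h⟩
    refine ⟨hne, ?_⟩
    have hn0 : n = 0 := hn.eq_zero
    rcases IsIdempotentElem.iff_eq_zero_or_one.mp he with he0 | he1
    · left; rw [h, hn0, he0, add_zero]
    · right; rw [h, hn0, he1, zero_add]
  · rintro ⟨hne, h | h⟩
    · exact ⟨hne, 0, 0, IsNilpotent.zero, IsIdempotentElem.zero, by rw [h, add_zero]⟩
    · exact ⟨hne, 0, 1, IsNilpotent.zero, IsIdempotentElem.one, by rw [h, zero_add]⟩

/-- the path sequence `0, 1, -1, 2, -2, ...` -/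
def fseq (k : ℕ) : ZMod p := if k % 2 = 0 then -(↑(k / 2)) else ↑(k / 2 + 1)

/-- position of a vertex along the path -/
def gpos (x : ZMod p) : ℕ :=
  if x.val = 0 then 0 else if 2 * x.val ≤ p then 2 * x.val - 1 else 2 * (p - x.val)

lemma two_le : 2 ≤ p := hp.out.two_le

lemma gpos_lt (x : ZMod p) : gpos p x < p := by
  have hv : x.val < p := ZMod.val_lt x
  have h2 := two_le p
  unfold gpos
  split_ifs <;> omega

lemma fseq_gpos (x : ZMod p) : fseq p (gpos p x) = x := by
  have hv : x.val < p := ZMod.val_lt x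
  have h2 := two_le p
  have hx : ((x.val : ℕ) : ZMod p) = x := ZMod.natCast_rightInverse x
  by_cases h0 : x.val = 0
  · have hg : gpos p x = 0 := by unfold gpos; rw [if_pos h0]
    rw [hg]
    unfold fseq
    norm_num
    rw [← hx, h0, Nat.cast_zero]
  · by_cases h1 : 2 * x.val ≤ p
    · have hg : gpos p x = 2 * x.val - 1 := by unfold gpos; rw [if_neg h0, if_pos h1]
      rw [hg]
      unfold fseq
      rw [if_neg (by omega), show (2 * x.val - 1) / 2 + 1 = x.val by omega, hx]
    · have hg : gpos p x = 2 * (p - x.val) := by unfold gpos; rw [if_neg h0, if_neg h1]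
      rw [hg]
      unfold fseq
      rw [if_pos (by omega), show 2 * (p - x.val) / 2 = p - x.val by omega]
      rw [Nat.cast_sub hv.le, ZMod.natCast_self, hx]
      simp

lemma mod_cases {a : ℕ} (h : a < 2 * p) : a % p = a ∨ (p ≤ a ∧ a % p = a - p) := by
  rcases Nat.lt_or_ge a p with h' | h'
  · exact Or.inl (Nat.mod_eq_of_lt h')
  · right
    refine ⟨h', ?_⟩
    rw [Nat.mod_eq_sub_mod h', Nat.mod_eq_of_lt (by omega)]

lemma val_facts {x y : ZMod p} (h : (nilCleanGraph (ZMod p)).Adj x y) :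
    x.val ≠ y.val ∧ (x.val + y.val = 1 ∨ x.val + y.val = p ∨ x.val + y.val = p + 1) := by
  have h2 := two_le p
  have hv : x.val < p := ZMod.val_lt x
  have hw : y.val < p := ZMod.val_lt y
  obtain ⟨hne, hsum⟩ := (adj_iff p x y).mp h
  have hnev : x.val ≠ y.val := fun hh => hne (ZMod.val_injective p hh)
  refine ⟨hnev, ?_⟩
  have hmod := mod_cases p (a := x.val + y.val) (by omega)
  rcases hsum with h0 | h1
  · have : (x + y).val = 0 := by rw [h0]; exact ZMod.val_zero
    rw [ZMod.val_add] at this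
    omega
  · have h1lt : Fact (1 < p) := ⟨h2⟩
    have : (x + y).val = 1 := by rw [h1]; exact ZMod.val_one p
    rw [ZMod.val_add] at this
    omega

lemma adj_gpos {x y : ZMod p} (h : (nilCleanGraph (ZMod p)).Adj x y) :
    gpos p x ≤ gpos p y + 1 ∧ gpos p y ≤ gpos p x + 1 := by
  have h2 := two_le p
  have hv : x.val < p := ZMod.val_lt x
  have hw : y.val < p := ZMod.val_lt y
  obtain ⟨hne, hsum⟩ := val_facts p h
  unfold gpos
  split_ifs <;> omega

lemma walk_le {x y : ZMod p} (w : (nilCleanGraph (ZMod p)).Walk x y) :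
    gpos p y ≤ gpos p x + w.length := by
  induction w with
  | nil => simp
  | cons h w ih =>
    have h1 := (adj_gpos p h).1
    have h2 := (adj_gpos p h).2
    simp only [SimpleGraph.Walk.length_cons]
    omega

lemma adj_fseq {k : ℕ} (h : k + 1 < p) :
    (nilCleanGraph (ZMod p)).Adj (fseq p k) (fseq p (k + 1)) := by
  have h2 := two_le p
  rw [adj_iff]
  have hdvd : ¬ (p ∣ k + 1) := fun hd => by
    have := Nat.le_of_dvd (by omega) hd; omega
  rcases Nat.even_or_odd k with he | ho
  · have hk : k % 2 = 0 := Nat.even_iff.mp he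
    have hk1 : (k + 1) % 2 = 1 := by omega
    have hq : (k + 1) / 2 = k / 2 := by omega
    unfold fseq
    rw [if_pos hk, if_neg (by omega), hq]
    constructor
    · intro heq
      apply hdvd
      rw [← ZMod.natCast_eq_zero_iff]
      have hsum : ((k / 2 : ℕ) : ZMod p) + ((k / 2 + 1 : ℕ) : ZMod p) = 0 := by
        rw [← heq]; ring
      push_cast at hsum
      rw [show k + 1 = k / 2 + k / 2 + 1 by omega]
      push_cast
      linear_combination hsum
    · right
      push_cast
      ring
  · have hk : k % 2 = 1 := Nat.odd_iff.mp ho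
    have hk1 : (k + 1) % 2 = 0 := by omega
    have hq : (k + 1) / 2 = k / 2 + 1 := by omega
    unfold fseq
    rw [if_neg (by omega), if_pos hk1, hq]
    constructor
    · intro heq
      apply hdvd
      rw [← ZMod.natCast_eq_zero_iff]
      have hsum : ((k / 2 + 1 : ℕ) : ZMod p) + ((k / 2 + 1 : ℕ) : ZMod p) = 0 := by
        nth_rewrite 2 [heq]; ring
      push_cast at hsum
      rw [show k + 1 = k / 2 + k / 2 + 1 + 1 by omega]
      push_cast
      linear_combination hsum
    · left
      push_cast
      ring

lemma edist_fseq (i : ℕ) : ∀ d : ℕ, i + d < p →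
    (nilCleanGraph (ZMod p)).edist (fseq p i) (fseq p (i + d)) ≤ (d : ℕ∞) := by
  intro d
  induction d with
  | zero => intro _; simp [SimpleGraph.edist_self]
  | succ d ih =>
    intro hd
    have h1 : (nilCleanGraph (ZMod p)).edist (fseq p (i + d)) (fseq p (i + d + 1)) = 1 :=
      SimpleGraph.edist_eq_one_iff_adj.mpr (adj_fseq p (by omega))
    calc (nilCleanGraph (ZMod p)).edist (fseq p i) (fseq p (i + (d + 1)))
        ≤ (nilCleanGraph (ZMod p)).edist (fseq p i) (fseq p (i + d)) +
          (nilCleanGraph (ZMod p)).edist (fseq p (i + d)) (fseq p (i + (d + 1))) :=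
          SimpleGraph.edist_triangle
      _ ≤ (d : ℕ∞) + 1 := by
          rw [show i + (d + 1) = i + d + 1 from rfl, h1]
          exact add_le_add (ih (by omega)) (le_refl 1)
      _ = ((d + 1 : ℕ) : ℕ∞) := by push_cast; ring

lemma edist_le_aux {x y : ZMod p} (hxy : gpos p x ≤ gpos p y) :
    (nilCleanGraph (ZMod p)).edist x y ≤ ((p - 1 : ℕ) : ℕ∞) := by
  have h := edist_fseq p (gpos p x) (gpos p y - gpos p x) (by have := gpos_lt p y; omega)
  rw [show gpos p x + (gpos p y - gpos p x) = gpos p y by omega, fseq_gpos, fseq_gpos] at h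
  refine h.trans ?_
  have hy := gpos_lt p y
  have hle : gpos p y - gpos p x ≤ p - 1 := by omega
  exact_mod_cast Nat.cast_le.mpr hle

lemma ediam_le : (nilCleanGraph (ZMod p)).ediam ≤ ((p - 1 : ℕ) : ℕ∞) := by
  apply SimpleGraph.ediam_le_of_edist_le
  intro u v
  rcases le_total (gpos p u) (gpos p v) with h | h
  · exact edist_le_aux p h
  · rw [SimpleGraph.edist_comm]; exact edist_le_aux p h

lemma gpos_zero : gpos p (0 : ZMod p) = 0 := by
  unfold gpos
  rw [if_pos ZMod.val_zero]

lemma gpos_mid : gpos p (((p + 1) / 2 : ℕ) : ZMod p) = p - 1 := by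
  have h2 := two_le p
  have hlt : (p + 1) / 2 < p := by omega
  have hv : (((p + 1) / 2 : ℕ) : ZMod p).val = (p + 1) / 2 := ZMod.val_cast_of_lt hlt
  unfold gpos
  rw [hv]
  rcases (Nat.even_or_odd p) with he | ho
  · have : p = 2 := (Nat.Prime.even_iff hp.out).mp he
    subst this
    norm_num
  · have hodd : p % 2 = 1 := Nat.odd_iff.mp ho
    split_ifs <;> omega

lemma le_ediam : ((p - 1 : ℕ) : ℕ∞) ≤ (nilCleanGraph (ZMod p)).ediam := by
  refine le_trans ?_ (SimpleGraph.edist_le_ediam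
    (u := (0 : ZMod p)) (v := (((p + 1) / 2 : ℕ) : ZMod p)))
  rw [SimpleGraph.edist_eq_sInf]
  apply le_sInf
  rintro _ ⟨w, rfl⟩
  have hw := walk_le p w
  rw [gpos_zero, gpos_mid] at hw
  have hle : p - 1 ≤ w.length := by omega
  exact_mod_cast Nat.cast_le.mpr hle

end Stmt19Aux

theorem stmt19 (p : ℕ) [Fact p.Prime] :
    (nilCleanGraph (ZMod p)).diam = p - 1 := by
  have h : (nilCleanGraph (ZMod p)).ediam = ((p - 1 : ℕ) : ℕ∞) :=
    le_antisymm (Stmt19Aux.ediam_le p) (Stmt19Aux.le_ediam p)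
  rw [SimpleGraph.diam, h, ENat.toNat_coe]
end
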